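/- If S = {x_1, ..., x_{2(n+1)}} is a (-1/n)-almost-equiangular subset of S^{n-1} of cardinality 2(n+1), then the sum of the vectors in S is zero (the barycenter of S is the origin). -/

import Mathlib

open scoped RealInnerProductSpace

namespace MaxObtuseAux

open Finset

variable {α : Type*} [DecidableEq α] {ι : Type*} [Fintype ι]

/-- The Gram pairing of a family of "vectors" `Y`. -/
noncomputable def P (Y : α → ι → ℝ) (x y : α) : ℝ := ∑ i, Y x i * Y y i

lemma P_symm (Y : α → ι → ℝ) (x y : α) : P Y x y = P Y y x :=
  Finset.sum_congr rfl fun i _ => mul_comm _ _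

lemma sum_comm4 {A B C D : Type*} (sa : Finset A) (sb : Finset B) (sc : Finset C)
    (sd : Finset D) (F : A → B → C → D → ℝ) :
    ∑ i ∈ sa, ∑ j ∈ sb, ∑ x ∈ sc, ∑ y ∈ sd, F i j x y
      = ∑ x ∈ sc, ∑ y ∈ sd, ∑ i ∈ sa, ∑ j ∈ sb, F i j x y := by
  calc ∑ i ∈ sa, ∑ j ∈ sb, ∑ x ∈ sc, ∑ y ∈ sd, F i j x y
      = ∑ i ∈ sa, ∑ x ∈ sc, ∑ j ∈ sb, ∑ y ∈ sd, F i j x y :=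
        Finset.sum_congr rfl fun i _ => Finset.sum_comm
    _ = ∑ x ∈ sc, ∑ i ∈ sa, ∑ j ∈ sb, ∑ y ∈ sd, F i j x y := Finset.sum_comm
    _ = ∑ x ∈ sc, ∑ i ∈ sa, ∑ y ∈ sd, ∑ j ∈ sb, F i j x y :=
        Finset.sum_congr rfl fun x _ => Finset.sum_congr rfl fun i _ => Finset.sum_comm
    _ = ∑ x ∈ sc, ∑ y ∈ sd, ∑ i ∈ sa, ∑ j ∈ sb, F i j x y :=
        Finset.sum_congr rfl fun x _ => Finset.sum_comm

set_option maxHeartbeats 1000000 in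
/-- The key abstract inequality. -/
theorem key (S : Finset α) (Y : α → ι → ℝ) (c : ℝ) (hc : 0 < c)
    (hcard : S.card = 2 * Fintype.card ι)
    (hdiag : ∀ x ∈ S, P Y x x = c)
    (htriple : ∀ x ∈ S, ∀ y ∈ S, ∀ z ∈ S, x ≠ y → x ≠ z → y ≠ z →
      P Y x y = 0 ∨ P Y x z = 0 ∨ P Y y z = 0) :
    ∑ x ∈ S, ∑ y ∈ S, P Y x y ≤ 4 * Fintype.card ι * c := by
  classical
  set k : ℝ := (Fintype.card ι : ℝ) with hk
  set p : α → α → ℝ := P Y with hpdef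
  -- trivial case: empty index type
  rcases Nat.eq_zero_or_pos (Fintype.card ι) with h0 | hKpos
  · have hS : S = ∅ := Finset.card_eq_zero.mp (by omega)
    rw [hS]
    simp only [Finset.sum_empty]
    have hk0 : (0:ℝ) ≤ k := by rw [hk]; positivity
    nlinarith [hc, hk0]
  have hkpos : (0:ℝ) < k := by rw [hk]; exact_mod_cast hKpos
  set q : α → α → ℝ := fun x y => if x = y then 0 else p x y with hqdef
  have hqsymm : ∀ x y, q x y = q y x := by
    intro x y
    by_cases h : x = y
    · subst h; rfl
    · simp only [hqdef, if_neg h, if_neg (Ne.symm h)]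
      exact P_symm Y x y
  have hpq : ∀ x ∈ S, ∀ y, p x y = q x y + (if x = y then c else 0) := by
    intro x hx y
    by_cases h : x = y
    · subst h; simp [hqdef, hdiag x hx]
    · simp [hqdef, if_neg h]
  set A : ℝ := ∑ x ∈ S, ∑ y ∈ S, (p x y)^2 with hA
  set Q : ℝ := ∑ x ∈ S, ∑ y ∈ S, (q x y)^2 with hQ
  set C : ℝ := ∑ x ∈ S, ∑ y ∈ S, ∑ z ∈ S, p x y * p x z * p y z with hC
  have hmS : (S.card : ℝ) = 2 * k := by rw [hcard]; push_cast; ring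
  -- diagonal sum
  have hdsum : ∑ x ∈ S, p x x = 2 * k * c := by
    rw [Finset.sum_congr rfl (fun x hx => hdiag x hx), Finset.sum_const, nsmul_eq_mul, hmS]
  -- Step (1): A = Q + 2 k c^2
  have h1 : A = Q + 2 * k * c^2 := by
    have hpt : ∀ x ∈ S, ∀ y, (p x y)^2 = (q x y)^2 + (if x = y then c^2 else 0) := by
      intro x hx y
      by_cases h : x = y
      · subst h
        rw [hdiag x hx]
        simp [hqdef]
      · simp [hqdef, if_neg h]
    calc A = ∑ x ∈ S, ∑ y ∈ S, ((q x y)^2 + if x = y then c^2 else 0) :=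
          Finset.sum_congr rfl fun x hx => Finset.sum_congr rfl fun y _ => hpt x hx y
      _ = Q + ∑ x ∈ S, ∑ y ∈ S, (if x = y then c^2 else 0) := by
          rw [hQ, ← Finset.sum_add_distrib]
          exact Finset.sum_congr rfl fun x _ => Finset.sum_add_distrib
      _ = Q + ∑ x ∈ S, c^2 := by
          congr 1
          refine Finset.sum_congr rfl fun x hx => ?_
          rw [Finset.sum_ite_eq S x (fun _ => c^2), if_pos hx]
      _ = Q + 2 * k * c^2 := by
          rw [Finset.sum_const, nsmul_eq_mul, hmS]
  have hqxx : ∀ x, q x x = 0 := fun x => by simp [hqdef]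
  -- Step (2): C = 3 c Q + 2 k c^3
  have h2 : C = 3 * c * Q + 2 * k * c^3 := by
    have expand : ∀ x ∈ S, ∀ y ∈ S, ∀ z ∈ S, p x y * p x z * p y z
        = q x y * q x z * q y z
        + (if x = y then c * (q x z * q y z) else 0)
        + (if x = z then c * (q x y * q y z) else 0)
        + (if y = z then c * (q x y * q x z) else 0)
        + (if x = y then (if x = z then c * c * q y z else 0) else 0)
        + (if x = y then (if y = z then c * c * q x z else 0) else 0)
        + (if x = z then (if y = z then c * c * q x y else 0) else 0)
        + (if x = y then (if x = z then (if y = z then c * c * c else 0) else 0) else 0) := by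
      intro x hx y hy z hz
      rw [hpq x hx y, hpq x hx z, hpq y hy z]
      split_ifs with h1 h2 h3 h4 h5 h6 h7 <;>
        first
          | ring
          | simp_all
    have hU1 : ∑ x ∈ S, ∑ y ∈ S, ∑ z ∈ S, q x y * q x z * q y z = 0 := by
      refine Finset.sum_eq_zero fun x hx => Finset.sum_eq_zero fun y hy =>
        Finset.sum_eq_zero fun z hz => ?_
      by_cases h1 : x = y
      · rw [h1, hqxx, zero_mul, zero_mul]
      by_cases h2 : x = z
      · rw [h2, hqxx, mul_zero, zero_mul]
      by_cases h3 : y = z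
      · rw [h3, hqxx, mul_zero]
      rcases htriple x hx y hy z hz h1 h2 h3 with h | h | h
      · have : q x y = 0 := by rw [hqdef]; simp [h1, h]
        rw [this, zero_mul, zero_mul]
      · have : q x z = 0 := by rw [hqdef]; simp [h2, h]
        rw [this, mul_zero, zero_mul]
      · have : q y z = 0 := by rw [hqdef]; simp [h3, h]
        rw [this, mul_zero]
    have hU2 : ∑ x ∈ S, ∑ y ∈ S, ∑ z ∈ S, (if x = y then c * (q x z * q y z) else 0)
        = c * Q := by
      rw [hQ, Finset.mul_sum]
      refine Finset.sum_congr rfl fun x hx => ?_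
      calc ∑ y ∈ S, ∑ z ∈ S, (if x = y then c * (q x z * q y z) else 0)
          = ∑ y ∈ S, (if x = y then ∑ z ∈ S, c * (q x z * q y z) else 0) := by
            refine Finset.sum_congr rfl fun y _ => ?_
            split_ifs with h
            · rfl
            · exact Finset.sum_const_zero
        _ = ∑ z ∈ S, c * (q x z * q x z) := by
            rw [Finset.sum_ite_eq S x _, if_pos hx]
        _ = c * ∑ y ∈ S, q x y ^ 2 := by
            rw [Finset.mul_sum]
            refine Finset.sum_congr rfl fun z _ => by rw [sq]
    have hU3 : ∑ x ∈ S, ∑ y ∈ S, ∑ z ∈ S, (if x = z then c * (q x y * q y z) else 0)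
        = c * Q := by
      rw [hQ, Finset.mul_sum]
      refine Finset.sum_congr rfl fun x hx => ?_
      rw [Finset.mul_sum]
      refine Finset.sum_congr rfl fun y _ => ?_
      rw [Finset.sum_ite_eq S x _, if_pos hx, hqsymm y x, sq]
    have hU4 : ∑ x ∈ S, ∑ y ∈ S, ∑ z ∈ S, (if y = z then c * (q x y * q x z) else 0)
        = c * Q := by
      rw [hQ, Finset.mul_sum]
      refine Finset.sum_congr rfl fun x hx => ?_
      rw [Finset.mul_sum]
      refine Finset.sum_congr rfl fun y hy => ?_
      rw [Finset.sum_ite_eq S y _, if_pos hy, sq]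
    have hU5 : ∑ x ∈ S, ∑ y ∈ S, ∑ z ∈ S,
        (if x = y then (if x = z then c * c * q y z else 0) else 0) = 0 := by
      refine Finset.sum_eq_zero fun x hx => ?_
      calc ∑ y ∈ S, ∑ z ∈ S, (if x = y then (if x = z then c * c * q y z else 0) else 0)
          = ∑ y ∈ S, (if x = y then ∑ z ∈ S, (if x = z then c * c * q y z else 0) else 0) := by
            refine Finset.sum_congr rfl fun y _ => ?_
            split_ifs with h
            · rfl
            · exact Finset.sum_const_zero
        _ = ∑ z ∈ S, (if x = z then c * c * q x z else 0) := by
            rw [Finset.sum_ite_eq S x _, if_pos hx]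
        _ = c * c * q x x := by rw [Finset.sum_ite_eq S x _, if_pos hx]
        _ = 0 := by rw [hqxx, mul_zero]
    have hU6 : ∑ x ∈ S, ∑ y ∈ S, ∑ z ∈ S,
        (if x = y then (if y = z then c * c * q x z else 0) else 0) = 0 := by
      refine Finset.sum_eq_zero fun x hx => ?_
      calc ∑ y ∈ S, ∑ z ∈ S, (if x = y then (if y = z then c * c * q x z else 0) else 0)
          = ∑ y ∈ S, (if x = y then ∑ z ∈ S, (if y = z then c * c * q x z else 0) else 0) := by
            refine Finset.sum_congr rfl fun y _ => ?_
            split_ifs with h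
            · rfl
            · exact Finset.sum_const_zero
        _ = ∑ z ∈ S, (if x = z then c * c * q x z else 0) := by
            rw [Finset.sum_ite_eq S x _, if_pos hx]
        _ = c * c * q x x := by rw [Finset.sum_ite_eq S x _, if_pos hx]
        _ = 0 := by rw [hqxx, mul_zero]
    have hU7 : ∑ x ∈ S, ∑ y ∈ S, ∑ z ∈ S,
        (if x = z then (if y = z then c * c * q x y else 0) else 0) = 0 := by
      refine Finset.sum_eq_zero fun x hx => ?_
      calc ∑ y ∈ S, ∑ z ∈ S, (if x = z then (if y = z then c * c * q x y else 0) else 0)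
          = ∑ y ∈ S, (if y = x then c * c * q x y else 0) := by
            refine Finset.sum_congr rfl fun y _ => ?_
            rw [Finset.sum_ite_eq S x (fun z => if y = z then c * c * q x y else 0), if_pos hx]
        _ = c * c * q x x := by
            rw [Finset.sum_ite_eq' S x (fun y => c * c * q x y), if_pos hx]
        _ = 0 := by rw [hqxx, mul_zero]
    have hU8 : ∑ x ∈ S, ∑ y ∈ S, ∑ z ∈ S,
        (if x = y then (if x = z then (if y = z then c * c * c else 0) else 0) else 0)
        = 2 * k * c^3 := by
      have hper : ∀ x ∈ S, (∑ y ∈ S, ∑ z ∈ S,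
          (if x = y then (if x = z then (if y = z then c * c * c else 0) else 0) else 0))
          = c * c * c := by
        intro x hx
        calc ∑ y ∈ S, ∑ z ∈ S,
            (if x = y then (if x = z then (if y = z then c * c * c else 0) else 0) else 0)
            = ∑ y ∈ S, (if x = y then
                ∑ z ∈ S, (if x = z then (if y = z then c * c * c else 0) else 0) else 0) := by
              refine Finset.sum_congr rfl fun y _ => ?_
              split_ifs with h
              · rfl
              · exact Finset.sum_const_zero
          _ = ∑ z ∈ S, (if x = z then (if x = z then c * c * c else 0) else 0) := by
              rw [Finset.sum_ite_eq S x _, if_pos hx]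
          _ = (if x = x then c * c * c else 0) := by
              rw [Finset.sum_ite_eq S x (fun z => if x = z then c * c * c else 0), if_pos hx,
                if_pos rfl]
          _ = c * c * c := if_pos rfl
        
      rw [Finset.sum_congr rfl hper, Finset.sum_const, nsmul_eq_mul, hmS]
      ring
    calc C = ∑ x ∈ S, ∑ y ∈ S, ∑ z ∈ S, (q x y * q x z * q y z
        + (if x = y then c * (q x z * q y z) else 0)
        + (if x = z then c * (q x y * q y z) else 0)
        + (if y = z then c * (q x y * q x z) else 0)
        + (if x = y then (if x = z then c * c * q y z else 0) else 0)
        + (if x = y then (if y = z then c * c * q x z else 0) else 0)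
        + (if x = z then (if y = z then c * c * q x y else 0) else 0)
        + (if x = y then (if x = z then (if y = z then c * c * c else 0) else 0) else 0)) := by
          rw [hC]
          exact Finset.sum_congr rfl fun x hx => Finset.sum_congr rfl fun y hy =>
            Finset.sum_congr rfl fun z hz => expand x hx y hy z hz
      _ = 3 * c * Q + 2 * k * c^3 := by
          simp only [Finset.sum_add_distrib]
          rw [hU1, hU2, hU3, hU4, hU5, hU6, hU7, hU8]
          ring
  -- Step (3): sum of squares identity
  have h3 : ∑ x ∈ S, ∑ i, (∑ y ∈ S, p x y * Y y i - 2 * c * Y x i)^2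
      = C - 4 * c * A + 8 * k * c^3 := by
    have key : ∀ x ∈ S, ∑ i, (∑ y ∈ S, p x y * Y y i - 2 * c * Y x i)^2
        = (∑ y ∈ S, ∑ z ∈ S, p x y * p x z * p y z)
          - 4 * c * (∑ y ∈ S, (p x y)^2) + 4 * c^2 * p x x := by
      intro x hx
      have e1 : ∑ i, (∑ y ∈ S, p x y * Y y i)^2
          = ∑ y ∈ S, ∑ z ∈ S, p x y * p x z * p y z := by
        calc ∑ i, (∑ y ∈ S, p x y * Y y i)^2
            = ∑ i, ∑ y ∈ S, ∑ z ∈ S, (p x y * Y y i) * (p x z * Y z i) := by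
              refine Finset.sum_congr rfl fun i _ => ?_
              rw [sq, Finset.sum_mul_sum]
          _ = ∑ y ∈ S, ∑ z ∈ S, ∑ i, ∑ j ∈ ({0} : Finset ℕ),
                (p x y * Y y i) * (p x z * Y z i) := by
              have := sum_comm4 (Finset.univ : Finset ι) ({0} : Finset ℕ) S S
                (fun i _ y z => (p x y * Y y i) * (p x z * Y z i))
              simpa using this
          _ = ∑ y ∈ S, ∑ z ∈ S, ∑ i, (p x y * Y y i) * (p x z * Y z i) := by
              simp
          _ = ∑ y ∈ S, ∑ z ∈ S, p x y * p x z * p y z := by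
              refine Finset.sum_congr rfl fun y _ => Finset.sum_congr rfl fun z _ => ?_
              have : ∀ i, (p x y * Y y i) * (p x z * Y z i)
                  = (p x y * p x z) * (Y y i * Y z i) := fun i => by ring
              rw [Finset.sum_congr rfl fun i _ => this i, ← Finset.mul_sum]
              show (p x y * p x z) * P Y y z = _
              ring
      have e2 : ∑ i, (∑ y ∈ S, p x y * Y y i) * (2 * c * Y x i)
          = 2 * c * ∑ y ∈ S, (p x y)^2 := by
        calc ∑ i, (∑ y ∈ S, p x y * Y y i) * (2 * c * Y x i)
            = ∑ i, ∑ y ∈ S, (2 * c * p x y) * (Y y i * Y x i) := by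
              refine Finset.sum_congr rfl fun i _ => ?_
              rw [Finset.sum_mul]
              exact Finset.sum_congr rfl fun y _ => by ring
          _ = ∑ y ∈ S, ∑ i, (2 * c * p x y) * (Y y i * Y x i) := Finset.sum_comm
          _ = ∑ y ∈ S, (2 * c * p x y) * p y x := by
              refine Finset.sum_congr rfl fun y _ => ?_
              rw [← Finset.mul_sum]
              rfl
          _ = 2 * c * ∑ y ∈ S, (p x y)^2 := by
              rw [Finset.mul_sum]
              refine Finset.sum_congr rfl fun y _ => ?_
              rw [show p y x = p x y from P_symm Y y x, sq]
              ring
      have e3 : ∑ i, (2 * c * Y x i)^2 = 4 * c^2 * p x x := by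
        have : ∀ i, (2 * c * Y x i)^2 = 4 * c^2 * (Y x i * Y x i) := fun i => by ring
        rw [Finset.sum_congr rfl fun i _ => this i, ← Finset.mul_sum]
        rfl
      calc ∑ i, (∑ y ∈ S, p x y * Y y i - 2 * c * Y x i)^2
          = ∑ i, ((∑ y ∈ S, p x y * Y y i)^2
              - 2 * ((∑ y ∈ S, p x y * Y y i) * (2 * c * Y x i)) + (2 * c * Y x i)^2) := by
            refine Finset.sum_congr rfl fun i _ => by ring
        _ = (∑ i, (∑ y ∈ S, p x y * Y y i)^2)
              - 2 * (∑ i, (∑ y ∈ S, p x y * Y y i) * (2 * c * Y x i))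
              + ∑ i, (2 * c * Y x i)^2 := by
            rw [Finset.sum_add_distrib, Finset.sum_sub_distrib, Finset.mul_sum]
        _ = _ := by rw [e1, e2, e3]; ring
    calc ∑ x ∈ S, ∑ i, (∑ y ∈ S, p x y * Y y i - 2 * c * Y x i)^2
        = ∑ x ∈ S, ((∑ y ∈ S, ∑ z ∈ S, p x y * p x z * p y z)
            - 4 * c * (∑ y ∈ S, (p x y)^2) + 4 * c^2 * p x x) :=
          Finset.sum_congr rfl key
      _ = C - 4 * c * A + 8 * k * c^3 := by
          rw [Finset.sum_add_distrib, Finset.sum_sub_distrib, ← Finset.mul_sum, ← Finset.mul_sum,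
            hdsum, ← hC, ← hA]
          ring
  -- Step (4): Cauchy-Schwarz rank bound
  have h4 : (2 * k * c)^2 ≤ k * A := by
    set T : ι → ι → ℝ := fun i j => ∑ x ∈ S, Y x i * Y x j with hT
    have t1 : ∑ i, T i i = 2 * k * c := by
      have : ∑ i, T i i = ∑ x ∈ S, p x x := Finset.sum_comm
      rw [this, hdsum]
    have t2 : (∑ i, T i i)^2 ≤ k * ∑ i, (T i i)^2 := by
      have := sq_sum_le_card_mul_sum_sq (s := (Finset.univ : Finset ι)) (f := fun i => T i i)
      simpa [hk, Finset.card_univ] using this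
    have t3 : ∑ i, (T i i)^2 ≤ ∑ i, ∑ j, (T i j)^2 :=
      Finset.sum_le_sum fun i _ =>
        Finset.single_le_sum (f := fun j => (T i j)^2) (fun j _ => sq_nonneg _) (Finset.mem_univ i)
    have t4 : ∑ i, ∑ j, (T i j)^2 = A := by
      calc ∑ i, ∑ j, (T i j)^2
          = ∑ i, ∑ j, ∑ x ∈ S, ∑ y ∈ S, (Y x i * Y x j) * (Y y i * Y y j) := by
            refine Finset.sum_congr rfl fun i _ => Finset.sum_congr rfl fun j _ => ?_
            rw [sq, hT, Finset.sum_mul_sum]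
        _ = ∑ x ∈ S, ∑ y ∈ S, ∑ i, ∑ j, (Y x i * Y x j) * (Y y i * Y y j) :=
            sum_comm4 _ _ _ _ _
        _ = ∑ x ∈ S, ∑ y ∈ S, (p x y)^2 := by
            refine Finset.sum_congr rfl fun x _ => Finset.sum_congr rfl fun y _ => ?_
            rw [sq]
            show _ = (∑ i, Y x i * Y y i) * (∑ j, Y x j * Y y j)
            rw [Finset.sum_mul_sum]
            exact Finset.sum_congr rfl fun i _ => Finset.sum_congr rfl fun j _ => by ring
    calc (2 * k * c)^2 = (∑ i, T i i)^2 := by rw [t1]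
      _ ≤ k * ∑ i, (T i i)^2 := t2
      _ ≤ k * ∑ i, ∑ j, (T i j)^2 := by
          exact mul_le_mul_of_nonneg_left t3 (le_of_lt hkpos)
      _ = k * A := by rw [t4]
  clear_value A Q C
  -- combine: A = 4 k c^2
  have h3nonneg : (0:ℝ) ≤ C - 4 * c * A + 8 * k * c^3 := by
    rw [← h3]
    exact Finset.sum_nonneg fun x _ => Finset.sum_nonneg fun i _ => sq_nonneg _
  have hAle : A ≤ 4 * k * c^2 := by nlinarith [h2, h1, h3nonneg, hc]
  have hAge : 4 * k * c^2 ≤ A := by nlinarith [h4, hkpos]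
  have hAeq : A = 4 * k * c^2 := le_antisymm hAle hAge
  -- all residuals vanish
  have hzero : ∑ x ∈ S, ∑ i, (∑ y ∈ S, p x y * Y y i - 2 * c * Y x i)^2 = 0 := by
    rw [h3]; nlinarith [h2, h1, hAeq]
  have hr : ∀ x ∈ S, ∀ i, ∑ y ∈ S, p x y * Y y i = 2 * c * Y x i := by
    intro x hx i
    have hx2 : ∑ i, (∑ y ∈ S, p x y * Y y i - 2 * c * Y x i)^2 = 0 := by
      have := (Finset.sum_eq_zero_iff_of_nonneg
        (fun x _ => Finset.sum_nonneg fun i _ => sq_nonneg _)).mp hzero x hx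
      exact this
    have := (Finset.sum_eq_zero_iff_of_nonneg (fun i _ => sq_nonneg _)).mp hx2 i (Finset.mem_univ i)
    have h := pow_eq_zero_iff (n := 2) (by norm_num) |>.mp this
    linarith [h]
  -- define a and finish
  set a : α → ℝ := fun x => ∑ y ∈ S, p x y with ha
  have hasymm : ∀ y, ∑ x ∈ S, p x y = a y := by
    intro y
    rw [ha]
    exact Finset.sum_congr rfl fun x _ => P_symm Y x y
  set G : ι → ℝ := fun i => ∑ x ∈ S, Y x i with hG
  have haG : ∀ x, a x = ∑ i, Y x i * G i := by
    intro x
    show ∑ y ∈ S, ∑ i, Y x i * Y y i = ∑ i, Y x i * (∑ y ∈ S, Y y i)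
    rw [Finset.sum_comm]
    exact Finset.sum_congr rfl fun i _ => (Finset.mul_sum _ _ _).symm
  have h6 : ∀ x ∈ S, ∑ y ∈ S, p x y * a y = 2 * c * a x := by
    intro x hx
    calc ∑ y ∈ S, p x y * a y
        = ∑ y ∈ S, ∑ i, (p x y * Y y i) * G i := by
          refine Finset.sum_congr rfl fun y _ => ?_
          rw [haG y, Finset.mul_sum]
          exact Finset.sum_congr rfl fun i _ => by ring
      _ = ∑ i, ∑ y ∈ S, (p x y * Y y i) * G i := Finset.sum_comm
      _ = ∑ i, (∑ y ∈ S, p x y * Y y i) * G i := by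
          refine Finset.sum_congr rfl fun i _ => (Finset.sum_mul _ _ _).symm
      _ = ∑ i, (2 * c * Y x i) * G i := by
          refine Finset.sum_congr rfl fun i _ => by rw [hr x hx i]
      _ = 2 * c * ∑ i, Y x i * G i := by
          rw [Finset.mul_sum]
          exact Finset.sum_congr rfl fun i _ => by ring
      _ = 2 * c * a x := by rw [haG x]
  have h7 : ∑ x ∈ S, (a x)^2 = 2 * c * ∑ x ∈ S, a x := by
    calc ∑ x ∈ S, (a x)^2
        = ∑ y ∈ S, (∑ x ∈ S, p x y) * a y := by
          refine Finset.sum_congr rfl fun y _ => ?_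
          rw [hasymm y, sq]
      _ = ∑ y ∈ S, ∑ x ∈ S, p x y * a y := by
          refine Finset.sum_congr rfl fun y _ => Finset.sum_mul _ _ _
      _ = ∑ x ∈ S, ∑ y ∈ S, p x y * a y := Finset.sum_comm
      _ = ∑ x ∈ S, 2 * c * a x := Finset.sum_congr rfl h6
      _ = 2 * c * ∑ x ∈ S, a x := (Finset.mul_sum _ _ _).symm
  have h8 : (0:ℝ) ≤ ∑ x ∈ S, a x := by
    have : ∑ x ∈ S, a x = ∑ i, (G i)^2 := by
      calc ∑ x ∈ S, a x = ∑ x ∈ S, ∑ i, Y x i * G i :=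
            Finset.sum_congr rfl fun x _ => haG x
        _ = ∑ i, ∑ x ∈ S, Y x i * G i := Finset.sum_comm
        _ = ∑ i, (G i)^2 := by
            refine Finset.sum_congr rfl fun i _ => ?_
            rw [← Finset.sum_mul, sq]
    rw [this]
    exact Finset.sum_nonneg fun i _ => sq_nonneg _
  have h9 : (∑ x ∈ S, a x)^2 ≤ (2 * k) * ∑ x ∈ S, (a x)^2 := by
    calc (∑ x ∈ S, a x)^2 ≤ (S.card : ℝ) * ∑ x ∈ S, (a x)^2 := by
          exact sq_sum_le_card_mul_sum_sq
      _ = (2 * k) * ∑ x ∈ S, (a x)^2 := by rw [hmS]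
  have hgoal : (∑ x ∈ S, ∑ y ∈ S, p x y) = ∑ x ∈ S, a x := rfl
  set SA : ℝ := ∑ x ∈ S, a x with hSA
  set SA2 : ℝ := ∑ x ∈ S, (a x)^2 with hSA2
  clear_value SA SA2
  rw [hgoal]
  have h9' : SA^2 ≤ 4 * k * c * SA := by nlinarith [h9, h7]
  have hfin : SA ≤ 4 * k * c := by
    by_contra hcon
    push_neg at hcon
    have hpos4 : (0:ℝ) < 4 * k * c := by nlinarith [hkpos, hc]
    have ht : (0:ℝ) < SA := lt_trans hpos4 hcon
    nlinarith [h9']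
  exact hfin

end MaxObtuseAux

theorem max_obtuse_almost_equiangular_barycenter_zero (n : ℕ)
    (S : Finset (EuclideanSpace ℝ (Fin n)))
    (hunit : ∀ x ∈ S, ‖x‖ = 1)
    (halmost : ∀ x ∈ S, ∀ y ∈ S, ∀ z ∈ S, x ≠ y → x ≠ z → y ≠ z →
      ⟪x, y⟫ = -1 / n ∨ ⟪x, z⟫ = -1 / n ∨ ⟪y, z⟫ = -1 / n)
    (hcard : S.card = 2 * (n + 1)) :
    ∑ x ∈ S, x = 0 := by
  classical
  rcases Nat.eq_zero_or_pos n with hn | hn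
  · exfalso
    subst hn
    obtain ⟨x, hx⟩ : S.Nonempty := Finset.card_pos.mp (by rw [hcard]; norm_num)
    have hx0 : x = 0 := Subsingleton.elim x 0
    have := hunit x hx
    rw [hx0, norm_zero] at this
    exact one_ne_zero this.symm
  · set N : ℝ := (n : ℝ) with hN
    have hNpos : (0:ℝ) < N := by rw [hN]; exact_mod_cast hn
    set c : ℝ := (N + 1) / N with hcdef
    have hc : 0 < c := by positivity
    set Y : EuclideanSpace ℝ (Fin n) → Fin (n + 1) → ℝ :=
      fun x i => Fin.cases ((Real.sqrt N)⁻¹) (fun j => x j) i with hY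
    have hinner_sum : ∀ x y : EuclideanSpace ℝ (Fin n), ⟪x, y⟫ = ∑ j, x j * y j := by
      intro x y
      rw [PiLp.inner_apply]
      exact Finset.sum_congr rfl fun j _ => by simp [mul_comm]
    have hP : ∀ x y : EuclideanSpace ℝ (Fin n),
        MaxObtuseAux.P Y x y = ⟪x, y⟫ + 1 / N := by
      intro x y
      unfold MaxObtuseAux.P
      rw [Fin.sum_univ_succ]
      have h0 : Y x 0 * Y y 0 = 1 / N := by
        show (Real.sqrt N)⁻¹ * (Real.sqrt N)⁻¹ = 1 / N
        rw [← mul_inv, Real.mul_self_sqrt hNpos.le, one_div]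
      have hsucc : ∀ j : Fin n, Y x j.succ * Y y j.succ = x j * y j := fun j => rfl
      rw [h0, Finset.sum_congr rfl fun j _ => hsucc j, hinner_sum x y]
      ring
    have hdiag : ∀ x ∈ S, MaxObtuseAux.P Y x x = c := by
      intro x hx
      rw [hP, real_inner_self_eq_norm_sq, hunit x hx]
      rw [hcdef]
      field_simp
    have htriple : ∀ x ∈ S, ∀ y ∈ S, ∀ z ∈ S, x ≠ y → x ≠ z → y ≠ z →
        MaxObtuseAux.P Y x y = 0 ∨ MaxObtuseAux.P Y x z = 0 ∨ MaxObtuseAux.P Y y z = 0 := by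
      intro x hx y hy z hz hxy hxz hyz
      have hval : ∀ u v : EuclideanSpace ℝ (Fin n), ⟪u, v⟫ = -1 / (n:ℝ) →
          MaxObtuseAux.P Y u v = 0 := by
        intro u v h
        rw [hP, h, ← hN]
        field_simp
        ring
      rcases halmost x hx y hy z hz hxy hxz hyz with h | h | h
      · exact Or.inl (hval x y h)
      · exact Or.inr (Or.inl (hval x z h))
      · exact Or.inr (Or.inr (hval y z h))
    have hcard' : S.card = 2 * Fintype.card (Fin (n + 1)) := by simpa using hcard
    have hkey := MaxObtuseAux.key S Y c hc hcard' hdiag htriple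
    -- translate the conclusion
    have hsum : ∑ x ∈ S, ∑ y ∈ S, MaxObtuseAux.P Y x y
        = (∑ x ∈ S, ∑ y ∈ S, ⟪x, y⟫) + (2 * (N + 1))^2 / N := by
      have : ∀ x ∈ S, ∑ y ∈ S, MaxObtuseAux.P Y x y
          = (∑ y ∈ S, ⟪x, y⟫) + (2 * (N + 1)) / N := by
        intro x _
        rw [Finset.sum_congr rfl fun y _ => hP x y, Finset.sum_add_distrib,
          Finset.sum_const, nsmul_eq_mul, hcard]
        have : ((2 * (n + 1) : ℕ) : ℝ) = 2 * (N + 1) := by push_cast [hN]; ring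
        rw [this]
        ring
      rw [Finset.sum_congr rfl this, Finset.sum_add_distrib, Finset.sum_const, nsmul_eq_mul,
        hcard]
      have : ((2 * (n + 1) : ℕ) : ℝ) = 2 * (N + 1) := by push_cast [hN]; ring
      rw [this]
      field_simp
    have hcardFin : (Fintype.card (Fin (n + 1)) : ℝ) = N + 1 := by
      rw [Fintype.card_fin]; push_cast [hN]; ring
    have hfinal : (∑ x ∈ S, ∑ y ∈ S, ⟪x, y⟫) ≤ 0 := by
      have h1 : (∑ x ∈ S, ∑ y ∈ S, ⟪x, y⟫) + (2 * (N + 1))^2 / N ≤ 4 * (N + 1) * c := by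
        rw [← hsum, ← hcardFin]
        exact hkey
      have h2 : 4 * (N + 1) * c = (2 * (N + 1))^2 / N := by
        rw [hcdef]; field_simp; ring
      linarith
    have hinner0 : ⟪(∑ x ∈ S, x), (∑ x ∈ S, x)⟫ = ∑ x ∈ S, ∑ y ∈ S, ⟪x, y⟫ := by
      rw [sum_inner]
      exact Finset.sum_congr rfl fun x _ => inner_sum _ _ _
    have hzero : ⟪(∑ x ∈ S, x), (∑ x ∈ S, x)⟫ = 0 := by
      have hnn := real_inner_self_nonneg (x := (∑ x ∈ S, x))
      have hle := hfinal
      rw [← hinner0] at hle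
      linarith
    exact inner_self_eq_zero.mp hzero
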